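/- Let K be a symmetric nonnegative kernel with ∫ min{1,|x|} K(x) dx < +∞ and suppose half-spaces are local minimizers of P_K in every ball (i.e., P_K(H; B_R) ≤ P_K(F; B_R) whenever F \ B_R = H \ B_R). Then for every convex body E ⊂ ℝⁿ and every half-space H ⊂ ℝⁿ one has P_K(E ∩ H) ≤ P_K(E). -/

import Mathlib

open MeasureTheory Metric Set
open scoped ENNReal RealInnerProductSpace

/-- The `K`-interaction functional `L_K(E,F) = ∫_E ∫_F K(x-y) dx dy`. -/
noncomputable def LK {n : ℕ} (K : EuclideanSpace ℝ (Fin n) → ℝ≥0∞)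
    (E F : Set (EuclideanSpace ℝ (Fin n))) : ℝ≥0∞ :=
  ∫⁻ x in E, ∫⁻ y in F, K (x - y)

/-- The non-local `K`-perimeter `P_K(E) = L_K(E, Eᶜ)`. -/
noncomputable def PK {n : ℕ} (K : EuclideanSpace ℝ (Fin n) → ℝ≥0∞)
    (E : Set (EuclideanSpace ℝ (Fin n))) : ℝ≥0∞ :=
  LK K E Eᶜ

/-- The localized `K`-perimeter `P_K(E; A)`. -/
noncomputable def PKloc {n : ℕ} (K : EuclideanSpace ℝ (Fin n) → ℝ≥0∞)
    (E A : Set (EuclideanSpace ℝ (Fin n))) : ℝ≥0∞ :=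
  LK K (E ∩ A) (Eᶜ ∩ A) + LK K (E ∩ A) (Eᶜ ∩ Aᶜ) + LK K (E ∩ Aᶜ) (Eᶜ ∩ A)

section Aux

variable {n : ℕ}
local notation "V" => EuclideanSpace ℝ (Fin n)

/-- Indicator with value `1`, in `ℝ≥0∞`. -/
noncomputable def ind (S : Set V) : V → ℝ≥0∞ := S.indicator 1

lemma ind_mem {S : Set V} {x : V} (h : x ∈ S) : ind S x = 1 := by simp [ind, h]
lemma ind_not_mem {S : Set V} {x : V} (h : x ∉ S) : ind S x = 0 := by simp [ind, h]
lemma ind_inter (S T : Set V) (x : V) : ind (S ∩ T) x = ind S x * ind T x := by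
  by_cases hS : x ∈ S <;> by_cases hT : x ∈ T <;> simp [ind, hS, hT]
lemma ind_ne_top (S : Set V) (x : V) : ind S x ≠ ⊤ := by
  by_cases h : x ∈ S <;> simp [ind, h]
lemma ind_meas {S : Set V} (hS : MeasurableSet S) : Measurable (ind S) :=
  measurable_const.indicator hS
lemma setl {S : Set V} (hS : MeasurableSet S) (f : V → ℝ≥0∞) :
    ∫⁻ y in S, f y = ∫⁻ y, ind S y * f y := by
  rw [← lintegral_indicator hS]
  refine lintegral_congr fun y => ?_
  by_cases hy : y ∈ S <;> simp [ind, hy]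

variable {K : EuclideanSpace ℝ (Fin n) → ℝ≥0∞}

lemma meas_sub_ker (hK : Measurable K) : Measurable fun p : V × V => K (p.1 - p.2) :=
  hK.comp (measurable_fst.sub measurable_snd)

lemma meas_inner_int (hK : Measurable K) (F : Set V) :
    Measurable fun x : V => ∫⁻ y in F, K (x - y) :=
  Measurable.lintegral_prod_right' (f := fun p : V × V => K (p.1 - p.2)) (meas_sub_ker hK)

lemma LK_mono_left {E₁ E₂ F : Set V} (h : E₁ ⊆ E₂) : LK K E₁ F ≤ LK K E₂ F :=
  lintegral_mono' (Measure.restrict_mono h le_rfl) le_rfl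

lemma LK_mono_right {E F₁ F₂ : Set V} (h : F₁ ⊆ F₂) : LK K E F₁ ≤ LK K E F₂ :=
  lintegral_mono fun _ => lintegral_mono' (Measure.restrict_mono h le_rfl) le_rfl

lemma LK_empty_left (F : Set V) : LK K ∅ F = 0 := by simp [LK]

lemma LK_add_right (hK : Measurable K) (E F : Set V) {A : Set V} (hA : MeasurableSet A) :
    LK K E (F ∩ A) + LK K E (F ∩ Aᶜ) = LK K E F := by
  unfold LK
  rw [← lintegral_add_left (meas_inner_int hK (F ∩ A))]
  refine lintegral_congr fun x => ?_
  rw [← lintegral_inter_add_diff (fun y => K (x - y)) F hA, diff_eq]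

lemma LK_eq (hK : Measurable K) {E F : Set V} (hE : MeasurableSet E) (hF : MeasurableSet F) :
    LK K E F = ∫⁻ x, ∫⁻ y, ind E x * (ind F y * K (x - y)) := by
  rw [LK, setl hE]
  refine lintegral_congr fun x => ?_
  rw [setl hF, lintegral_const_mul' _ _ (ind_ne_top E x)]

lemma PKloc_eq_PK (hK : Measurable K) {E A : Set V} (hA : MeasurableSet A) (hEA : E ⊆ A) :
    PKloc K E A = PK K E := by
  have h1 : E ∩ A = E := inter_eq_left.2 hEA
  have h2 : E ∩ Aᶜ = (∅ : Set V) := by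
    apply eq_empty_of_subset_empty; intro x hx; exact hx.2 (hEA hx.1)
  rw [PKloc, PK, h1, h2, LK_empty_left, add_zero, LK_add_right hK E Eᶜ hA]

/-- The localization weight. -/
noncomputable def wgt (A : Set V) (x y : V) : ℝ≥0∞ := ind A x + ind Aᶜ x * ind A y

lemma double_add {F G : V → V → ℝ≥0∞}
    (hF : Measurable fun p : V × V => F p.1 p.2) :
    (∫⁻ x, ∫⁻ y, F x y) + (∫⁻ x, ∫⁻ y, G x y) = ∫⁻ x, ∫⁻ y, (F x y + G x y) := by
  rw [← lintegral_add_left (Measurable.lintegral_prod_right' hF)]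
  refine lintegral_congr fun x => ?_
  exact (lintegral_add_left (hF.comp (measurable_prodMk_left : Measurable fun y : V => (x, y))) _).symm

lemma PKloc_eq (hK : Measurable K) {E A : Set V} (hE : MeasurableSet E) (hA : MeasurableSet A) :
    PKloc K E A = ∫⁻ x, ∫⁻ y, (ind E x * ind Eᶜ y) * (wgt A x y * K (x - y)) := by
  rw [PKloc, LK_eq hK (hE.inter hA) (hE.compl.inter hA),
    LK_eq hK (hE.inter hA) (hE.compl.inter hA.compl),
    LK_eq hK (hE.inter hA.compl) (hE.compl.inter hA)]
  have m1 : Measurable fun p : V × V =>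
      ind (E ∩ A) p.1 * (ind (Eᶜ ∩ A) p.2 * K (p.1 - p.2)) :=
    ((ind_meas (hE.inter hA)).comp measurable_fst).mul
      (((ind_meas (hE.compl.inter hA)).comp measurable_snd).mul (meas_sub_ker hK))
  have m2 : Measurable fun p : V × V =>
      ind (E ∩ A) p.1 * (ind (Eᶜ ∩ Aᶜ) p.2 * K (p.1 - p.2)) :=
    ((ind_meas (hE.inter hA)).comp measurable_fst).mul
      (((ind_meas (hE.compl.inter hA.compl)).comp measurable_snd).mul (meas_sub_ker hK))
  rw [double_add m1, double_add (m1.add m2)]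
  refine lintegral_congr fun x => lintegral_congr fun y => ?_
  simp only [ind_inter, wgt]
  by_cases hx : x ∈ A <;> by_cases hy : y ∈ A <;>
    simp [ind_mem, ind_not_mem, hx, hy, mem_compl_iff, not_not] <;> ring

lemma submod_pointwise (E H : Set V) (x y : V) :
    ind (E ∩ H) x * ind (E ∩ H)ᶜ y + ind (E ∪ H) x * ind (E ∪ H)ᶜ y ≤
      ind E x * ind Eᶜ y + ind H x * ind Hᶜ y := by
  by_cases hxE : x ∈ E <;> by_cases hxH : x ∈ H <;> by_cases hyE : y ∈ E <;>
    by_cases hyH : y ∈ H <;>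
    simp [ind_mem, ind_not_mem, hxE, hxH, hyE, hyH, mem_inter_iff, mem_union, mem_compl_iff]

lemma submod (hK : Measurable K) {E H A : Set V} (hE : MeasurableSet E) (hH : MeasurableSet H)
    (hA : MeasurableSet A) :
    PKloc K (E ∩ H) A + PKloc K (E ∪ H) A ≤ PKloc K E A + PKloc K H A := by
  rw [PKloc_eq hK (hE.inter hH) hA, PKloc_eq hK (hE.union hH) hA, PKloc_eq hK hE hA,
    PKloc_eq hK hH hA]
  have mm : ∀ (S T : Set V), MeasurableSet S → MeasurableSet T →
      Measurable fun p : V × V => (ind S p.1 * ind T p.2) * (wgt A p.1 p.2 * K (p.1 - p.2)) := by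
    intro S T hS hT
    refine (((ind_meas hS).comp measurable_fst).mul ((ind_meas hT).comp measurable_snd)).mul
      (Measurable.mul ?_ (meas_sub_ker hK))
    exact ((ind_meas hA).comp measurable_fst).add
      (((ind_meas hA.compl).comp measurable_fst).mul ((ind_meas hA).comp measurable_snd))
  rw [double_add (mm _ _ (hE.inter hH) (hE.inter hH).compl),
    double_add (mm _ _ hE hE.compl)]
  refine lintegral_mono fun x => lintegral_mono fun y => ?_
  have hpt := submod_pointwise E H x y
  calc ind (E ∩ H) x * ind (E ∩ H)ᶜ y * (wgt A x y * K (x - y)) +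
        ind (E ∪ H) x * ind (E ∪ H)ᶜ y * (wgt A x y * K (x - y))
      = (ind (E ∩ H) x * ind (E ∩ H)ᶜ y + ind (E ∪ H) x * ind (E ∪ H)ᶜ y) *
        (wgt A x y * K (x - y)) := by ring
    _ ≤ (ind E x * ind Eᶜ y + ind H x * ind Hᶜ y) * (wgt A x y * K (x - y)) :=
        mul_le_mul_of_nonneg_right hpt zero_le'
    _ = ind E x * ind Eᶜ y * (wgt A x y * K (x - y)) +
        ind H x * ind Hᶜ y * (wgt A x y * K (x - y)) := by ring

lemma LK_symm (hK : Measurable K) (hKsym : ∀ x : V, K (-x) = K x) {E F : Set V}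
    (hE : MeasurableSet E) (hF : MeasurableSet F) : LK K E F = LK K F E := by
  rw [LK_eq hK hE hF, LK_eq hK hF hE]
  rw [lintegral_lintegral_swap (((ind_meas hE).comp measurable_fst).mul
      (((ind_meas hF).comp measurable_snd).mul (meas_sub_ker hK))).aemeasurable]
  refine lintegral_congr fun y => lintegral_congr fun x => ?_
  have h : (x : V) - y = -(y - x) := (neg_sub y x).symm
  rw [h, hKsym]
  ring

lemma slab_vol {ν : V} (hν : ν ≠ 0) (a b R : ℝ) :
    volume {x : V | x ∈ ball (0 : V) R ∧ a ≤ ⟪ν, x⟫ ∧ ⟪ν, x⟫ ≤ b} ≤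
      ENNReal.ofReal ((b - a) / ‖ν‖) * (ENNReal.ofReal (2 * R)) ^ (n - 1) := by
  have hn : 0 < n := by
    rcases Nat.eq_zero_or_pos n with h | h
    · subst h; exact absurd (Subsingleton.elim ν 0) hν
    · exact h
  have hνn : (0:ℝ) < ‖ν‖ := norm_pos_iff.2 hν
  set i0 : Fin n := ⟨0, hn⟩
  set u : V := ‖ν‖⁻¹ • ν with hu_def
  have hu : ‖u‖ = 1 := norm_smul_inv_norm hν
  obtain ⟨bb, hb⟩ : ∃ bb : OrthonormalBasis (Fin n) ℝ V, ∀ i ∈ ({i0} : Set (Fin n)), bb i = u := by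
    apply Orthonormal.exists_orthonormalBasis_extension_of_card_eq
    · simp [finrank_euclideanSpace_fin]
    · constructor
      · rintro ⟨i, hi⟩; simpa using hu
      · rintro ⟨i, hi⟩ ⟨j, hj⟩ hij
        rw [mem_singleton_iff] at hi hj
        exact absurd (Subtype.ext (hi.trans hj.symm)) hij
  have hb0 : bb i0 = u := hb i0 rfl
  have hcoord : ∀ x : V, bb.repr x i0 = ‖ν‖⁻¹ * ⟪ν, x⟫ := by
    intro x
    rw [bb.repr_apply_apply, hb0, hu_def, real_inner_smul_left]
  set I : Fin n → Set ℝ := fun i => if i = i0 then Icc (a / ‖ν‖) (b / ‖ν‖) else Icc (-R) R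
  set BoxPi : Set (Fin n → ℝ) := univ.pi I
  have hBoxPi : MeasurableSet BoxPi := by
    refine MeasurableSet.univ_pi fun i => ?_
    by_cases h : i = i0 <;> simp [I, h, measurableSet_Icc]
  have hsub : {x : V | x ∈ ball (0 : V) R ∧ a ≤ ⟪ν, x⟫ ∧ ⟪ν, x⟫ ≤ b} ⊆
      bb.repr ⁻¹' ((MeasurableEquiv.toLp 2 (Fin n → ℝ)).symm ⁻¹' BoxPi) := by
    rintro x ⟨hxB, hxa, hxb⟩
    have hxR : ‖x‖ < R := by simpa [mem_ball, dist_eq_norm] using hxB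
    intro i _
    by_cases h : i = i0
    · subst h
      have hthis : (MeasurableEquiv.toLp 2 (Fin n → ℝ)).symm (bb.repr x) i0 = bb.repr x i0 := rfl
      rw [hthis, hcoord x]
      simp only [I, if_pos rfl, mem_Icc, div_eq_inv_mul]
      constructor
      · exact mul_le_mul_of_nonneg_left hxa (by positivity)
      · exact mul_le_mul_of_nonneg_left hxb (by positivity)
    · have hthis : (MeasurableEquiv.toLp 2 (Fin n → ℝ)).symm (bb.repr x) i = bb.repr x i := rfl
      rw [hthis]
      simp only [I, if_neg h, mem_Icc]
      have h1 : |bb.repr x i| ≤ ‖x‖ := by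
        rw [bb.repr_apply_apply]
        calc |⟪bb i, x⟫| ≤ ‖bb i‖ * ‖x‖ := abs_real_inner_le_norm _ _
          _ = ‖x‖ := by rw [bb.orthonormal.1 i, one_mul]
      exact abs_le.1 (h1.trans hxR.le)
  calc volume {x : V | x ∈ ball (0 : V) R ∧ a ≤ ⟪ν, x⟫ ∧ ⟪ν, x⟫ ≤ b}
      ≤ volume (bb.repr ⁻¹' ((MeasurableEquiv.toLp 2 (Fin n → ℝ)).symm ⁻¹' BoxPi)) :=
        measure_mono hsub
    _ = volume ((MeasurableEquiv.toLp 2 (Fin n → ℝ)).symm ⁻¹' BoxPi) :=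
        bb.measurePreserving_repr.measure_preimage
          ((hBoxPi.preimage (MeasurableEquiv.toLp 2 (Fin n → ℝ)).symm.measurable).nullMeasurableSet)
    _ = volume BoxPi :=
        (EuclideanSpace.volume_preserving_symm_measurableEquiv_toLp (Fin n)).measure_preimage
          hBoxPi.nullMeasurableSet
    _ = ∏ i, volume (I i) := volume_pi_pi I
    _ = ENNReal.ofReal ((b - a) / ‖ν‖) * (ENNReal.ofReal (2 * R)) ^ (n - 1) := by
        rw [← Finset.mul_prod_erase Finset.univ _ (Finset.mem_univ i0)]
        have hprod : ∀ i ∈ Finset.univ.erase i0, volume (I i) = ENNReal.ofReal (2 * R) := by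
          intro i hi
          have h : i ≠ i0 := Finset.ne_of_mem_erase hi
          rw [show I i = Icc (-R) R from if_neg h, Real.volume_Icc]
          congr 1; ring
        rw [Finset.prod_congr rfl hprod, Finset.prod_const,
          Finset.card_erase_of_mem (Finset.mem_univ i0), Finset.card_univ, Fintype.card_fin,
          show I i0 = Icc (a / ‖ν‖) (b / ‖ν‖) from if_pos rfl, Real.volume_Icc,
          div_sub_div_same]

lemma minmax (a b t : ℝ≥0∞) : min a (t * b) ≤ max a b * min 1 t := by
  rcases le_total t 1 with h | h
  · rw [min_eq_right h, mul_comm (max a b) t]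
    exact (min_le_right _ _).trans (mul_le_mul_of_nonneg_left (le_max_right a b) zero_le')
  · rw [min_eq_left h, mul_one]
    exact (min_le_left _ _).trans (le_max_left a b)

lemma core (hK : Measurable K)
    (hKint : (∫⁻ x : V, min 1 (ENNReal.ofReal ‖x‖) * K x) < ⊤)
    {ν : V} (hν : ν ≠ 0) (c R : ℝ) :
    (∫⁻ x in ball (0:V) R ∩ {x : V | ⟪ν, x⟫ ≤ c}, ∫⁻ y in {y : V | c ≤ ⟪ν, y⟫}, K (x - y)) < ⊤ := by
  have hcont : Continuous fun x : V => ⟪ν, x⟫ := continuous_const.inner continuous_id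
  have hmS : MeasurableSet (ball (0:V) R ∩ {x : V | ⟪ν, x⟫ ≤ c}) :=
    measurableSet_ball.inter (isClosed_le hcont continuous_const).measurableSet
  have hmT : MeasurableSet {y : V | c ≤ ⟪ν, y⟫} :=
    (isClosed_le continuous_const hcont).measurableSet
  set S := ball (0:V) R ∩ {x : V | ⟪ν, x⟫ ≤ c} with hS_def
  set T := {y : V | c ≤ ⟪ν, y⟫} with hT_def
  set box : ℝ≥0∞ := (ENNReal.ofReal (2 * R)) ^ (n - 1) with hbox_def
  set C : ℝ≥0∞ := max (volume (ball (0:V) R)) box with hC_def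
  have hC_ne_top : C ≠ ⊤ := by
    rw [hC_def]
    exact (max_lt measure_ball_lt_top
      (ENNReal.pow_lt_top (ENNReal.ofReal_lt_top))).ne
  -- the sliced sets
  have hMz_meas : ∀ z : V, MeasurableSet (S ∩ {x : V | x - z ∈ T}) := fun z =>
    hmS.inter (hmT.preimage (measurable_id.sub measurable_const))
  have hMz_bound : ∀ z : V, volume (S ∩ {x : V | x - z ∈ T}) ≤ C * min 1 (ENNReal.ofReal ‖z‖) := by
    intro z
    have hb1 : volume (S ∩ {x : V | x - z ∈ T}) ≤ volume (ball (0:V) R) :=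
      measure_mono fun x hx => hx.1.1
    have hb2 : volume (S ∩ {x : V | x - z ∈ T}) ≤ ENNReal.ofReal ‖z‖ * box := by
      have hsub2 : S ∩ {x : V | x - z ∈ T} ⊆
          {x : V | x ∈ ball (0:V) R ∧ c + ⟪ν, z⟫ ≤ ⟪ν, x⟫ ∧ ⟪ν, x⟫ ≤ c} := by
        rintro x ⟨⟨hxB, hxc⟩, hxz⟩
        refine ⟨hxB, ?_, hxc⟩
        have : c ≤ ⟪ν, x - z⟫ := hxz
        rw [inner_sub_right] at this
        linarith
      refine (measure_mono hsub2).trans ((slab_vol hν _ _ R).trans ?_)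
      refine mul_le_mul_of_nonneg_right (ENNReal.ofReal_le_ofReal ?_) zero_le'
      have hνn : (0:ℝ) < ‖ν‖ := norm_pos_iff.2 hν
      rw [div_le_iff₀ hνn]
      have h1 : c - (c + ⟪ν, z⟫) = -⟪ν, z⟫ := by ring
      rw [h1]
      calc -⟪ν, z⟫ ≤ |⟪ν, z⟫| := neg_le_abs _
        _ ≤ ‖ν‖ * ‖z‖ := abs_real_inner_le_norm _ _
        _ = ‖z‖ * ‖ν‖ := mul_comm _ _
    calc volume (S ∩ {x : V | x - z ∈ T})
        ≤ min (volume (ball (0:V) R)) (ENNReal.ofReal ‖z‖ * box) := le_min hb1 hb2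
      _ ≤ C * min 1 (ENNReal.ofReal ‖z‖) := minmax _ _ _
  -- substitution in the inner integral
  have hsub : ∀ x : V, (∫⁻ y in T, K (x - y)) = ∫⁻ z, ind T (x - z) * K z := by
    intro x
    rw [setl hmT]
    have hmg : Measurable fun y : V => ind T y * K (x - y) :=
      (ind_meas hmT).mul (hK.comp (measurable_const.sub measurable_id))
    rw [← (Measure.measurePreserving_sub_left volume x).lintegral_comp hmg]
    refine lintegral_congr fun z => ?_
    simp [sub_sub_cancel]
  have hswap : (∫⁻ x in S, ∫⁻ y in T, K (x - y)) =
      ∫⁻ z, K z * volume (S ∩ {x : V | x - z ∈ T}) := by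
    calc (∫⁻ x in S, ∫⁻ y in T, K (x - y))
        = ∫⁻ x, ∫⁻ z, ind S x * (ind T (x - z) * K z) := by
          rw [setl hmS]
          refine lintegral_congr fun x => ?_
          rw [hsub x, lintegral_const_mul' _ _ (ind_ne_top _ x)]
      _ = ∫⁻ z, ∫⁻ x, ind S x * (ind T (x - z) * K z) := by
          refine lintegral_lintegral_swap ?_
          exact (((ind_meas hmS).comp measurable_fst).mul
            (((ind_meas hmT).comp (measurable_fst.sub measurable_snd)).mul
              (hK.comp measurable_snd))).aemeasurable
      _ = ∫⁻ z, K z * volume (S ∩ {x : V | x - z ∈ T}) := by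
          refine lintegral_congr fun z => ?_
          have hpt : ∀ x : V, ind S x * (ind T (x - z) * K z) =
              K z * ind (S ∩ {x : V | x - z ∈ T}) x := by
            intro x
            by_cases h1 : x ∈ S <;> by_cases h2 : x - z ∈ T <;>
              simp [ind_mem, ind_not_mem, h1, h2, mem_inter_iff, mem_setOf_eq, mul_comm]
          rw [lintegral_congr hpt, lintegral_const_mul _ (ind_meas (hMz_meas z))]
          congr 1
          exact lintegral_indicator_one (hMz_meas z)
  rw [hswap]
  have hfinal : (∫⁻ z, K z * volume (S ∩ {x : V | x - z ∈ T})) ≤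
      C * ∫⁻ z : V, min 1 (ENNReal.ofReal ‖z‖) * K z := by
    rw [← lintegral_const_mul _ (show Measurable fun z : V => min 1 (ENNReal.ofReal ‖z‖) * K z from
      (measurable_const.min (Measurable.ennreal_ofReal measurable_norm)).mul hK)]
    refine lintegral_mono fun z => ?_
    calc K z * volume (S ∩ {x : V | x - z ∈ T})
        ≤ K z * (C * min 1 (ENNReal.ofReal ‖z‖)) := mul_le_mul_of_nonneg_left (hMz_bound z) zero_le'
      _ = C * (min 1 (ENNReal.ofReal ‖z‖) * K z) := by ring
  exact lt_of_le_of_lt hfinal (ENNReal.mul_lt_top (lt_top_iff_ne_top.2 hC_ne_top) hKint)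

lemma halfspace_fin (hK : Measurable K) (hKsym : ∀ x : V, K (-x) = K x)
    (hKint : (∫⁻ x : V, min 1 (ENNReal.ofReal ‖x‖) * K x) < ⊤)
    {ν : V} (hν : ν ≠ 0) (c R : ℝ) :
    PKloc K {x : V | ⟪ν, x⟫ ≤ c} (ball (0:V) R) < ⊤ := by
  have hcont : Continuous fun x : V => ⟪ν, x⟫ := continuous_const.inner continuous_id
  set H := {x : V | ⟪ν, x⟫ ≤ c} with hH_def
  have hH : MeasurableSet H := (isClosed_le hcont continuous_const).measurableSet
  have hB : MeasurableSet (ball (0:V) R) := measurableSet_ball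
  have hHc_sub : Hᶜ ⊆ {y : V | c ≤ ⟪ν, y⟫} := fun y hy =>
    le_of_lt (not_le.1 (by simpa [hH_def] using hy))
  have hfirst : H ∩ ball (0:V) R ⊆ ball (0:V) R ∩ {x : V | ⟪ν, x⟫ ≤ c} := fun x hx =>
    ⟨hx.2, hx.1⟩
  have t1 : LK K (H ∩ ball (0:V) R) (Hᶜ ∩ ball (0:V) R) < ⊤ :=
    lt_of_le_of_lt ((LK_mono_left hfirst).trans
      (LK_mono_right ((inter_subset_left).trans hHc_sub))) (core hK hKint hν c R)
  have t2 : LK K (H ∩ ball (0:V) R) (Hᶜ ∩ (ball (0:V) R)ᶜ) < ⊤ :=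
    lt_of_le_of_lt ((LK_mono_left hfirst).trans
      (LK_mono_right ((inter_subset_left).trans hHc_sub))) (core hK hKint hν c R)
  have hν' : (-ν : V) ≠ 0 := neg_ne_zero.2 hν
  have t3 : LK K (H ∩ (ball (0:V) R)ᶜ) (Hᶜ ∩ ball (0:V) R) < ⊤ := by
    rw [LK_symm hK hKsym (hH.inter hB.compl) (hH.compl.inter hB)]
    refine lt_of_le_of_lt ?_ (core hK hKint hν' (-c) R)
    refine (LK_mono_left ?_).trans (LK_mono_right ?_)
    · rintro x ⟨hx1, hx2⟩
      refine ⟨hx2, ?_⟩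
      have : ¬⟪ν, x⟫ ≤ c := hx1
      simp only [mem_setOf_eq, inner_neg_left]
      linarith [not_le.1 this]
    · rintro y ⟨hy1, _⟩
      have : ⟪ν, y⟫ ≤ c := hy1
      simp only [mem_setOf_eq, inner_neg_left]
      linarith
  exact ENNReal.add_lt_top.2 ⟨ENNReal.add_lt_top.2 ⟨t1, t2⟩, t3⟩

end Aux

/-- If half-spaces are local minimizers of `P_K` in every ball, then intersecting a convex
body with a half-space does not increase the `K`-perimeter. -/
theorem stmt4 (n : ℕ) (K : EuclideanSpace ℝ (Fin n) → ℝ≥0∞)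
    (hKmeas : Measurable K)
    (hKsym : ∀ x : EuclideanSpace ℝ (Fin n), K (-x) = K x)
    (hKint : (∫⁻ x : EuclideanSpace ℝ (Fin n), min 1 (ENNReal.ofReal ‖x‖) * K x) < ⊤)
    (hmin : ∀ (ν : EuclideanSpace ℝ (Fin n)) (c : ℝ), ν ≠ 0 → ∀ R : ℝ, 0 < R →
      ∀ F : Set (EuclideanSpace ℝ (Fin n)), MeasurableSet F →
        F \ Metric.ball 0 R = {x | ⟪ν, x⟫ ≤ c} \ Metric.ball 0 R →
        PKloc K {x | ⟪ν, x⟫ ≤ c} (Metric.ball 0 R) ≤ PKloc K F (Metric.ball 0 R))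
    (E : Set (EuclideanSpace ℝ (Fin n)))
    (hEcomp : IsCompact E) (hEconv : Convex ℝ E) (hEint : (interior E).Nonempty)
    (ν : EuclideanSpace ℝ (Fin n)) (c : ℝ) (hν : ν ≠ 0) :
    PK K (E ∩ {x | ⟪ν, x⟫ ≤ c}) ≤ PK K E := by
  classical
  set H : Set (EuclideanSpace ℝ (Fin n)) := {x | ⟪ν, x⟫ ≤ c} with hH_def
  have hcont : Continuous fun x : EuclideanSpace ℝ (Fin n) => ⟪ν, x⟫ :=
    continuous_const.inner continuous_id
  have hH : MeasurableSet H := (isClosed_le hcont continuous_const).measurableSet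
  have hE : MeasurableSet E := hEcomp.isClosed.measurableSet
  obtain ⟨R, hR, hER⟩ := hEcomp.isBounded.subset_ball_lt 0 0
  have hunion : (E ∪ H) \ Metric.ball 0 R = H \ Metric.ball 0 R := by
    rw [union_diff_distrib, diff_eq_empty.2 hER, empty_union]
  have hstep := hmin ν c hν R hR (E ∪ H) (hE.union hH) hunion
  have hfin : PKloc K H (Metric.ball 0 R) < ⊤ := halfspace_fin hKmeas hKsym hKint hν c R
  have hsub := submod hKmeas hE hH (measurableSet_ball :
    MeasurableSet (Metric.ball (0 : EuclideanSpace ℝ (Fin n)) R))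
  have h1 : PKloc K (E ∩ H) (Metric.ball 0 R) = PK K (E ∩ H) :=
    PKloc_eq_PK hKmeas measurableSet_ball ((inter_subset_left).trans hER)
  have h2 : PKloc K E (Metric.ball 0 R) = PK K E :=
    PKloc_eq_PK hKmeas measurableSet_ball hER
  have key : PK K (E ∩ H) + PKloc K H (Metric.ball 0 R) ≤
      PK K E + PKloc K H (Metric.ball 0 R) := by
    calc PK K (E ∩ H) + PKloc K H (Metric.ball 0 R)
        = PKloc K (E ∩ H) (Metric.ball 0 R) + PKloc K H (Metric.ball 0 R) := by rw [h1]
      _ ≤ PKloc K (E ∩ H) (Metric.ball 0 R) + PKloc K (E ∪ H) (Metric.ball 0 R) :=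
          add_le_add (le_refl _) hstep
      _ ≤ PKloc K E (Metric.ball 0 R) + PKloc K H (Metric.ball 0 R) := hsub
      _ = PK K E + PKloc K H (Metric.ball 0 R) := by rw [h2]
  exact (ENNReal.add_le_add_iff_right hfin.ne).1 key
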